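/- Let F, G : ℝ → ℝ be strictly convex functions attaining global minima at x_F and x_G respectively, with x_F < x_G. For λ ∈ [0,1] let x_λ denote the unique global minimizer of H_λ(x) = λ F(x) + (1−λ) G(x) (which exists and lies in [x_F, x_G]). Then the map λ ↦ x_λ is (weakly) decreasing: if λ' > λ then x_{λ'} ≤ x_λ. -/

import Mathlib

/-- A strictly convex function with global minimum at `x0` is strictly
increasing to the right of `x0`. -/
lemma aux_strictMono_right (F : ℝ → ℝ) (hF : StrictConvexOn ℝ Set.univ F)
    (x0 : ℝ) (hm : ∀ x, F x0 ≤ F x) {b a : ℝ} (hb : x0 ≤ b) (hba : b < a) :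
    F b < F a := by
  rcases eq_or_lt_of_le hb with rfl | hb'
  · have hne : x0 ≠ a := ne_of_lt hba
    have h := hF.2 (Set.mem_univ x0) (Set.mem_univ a) hne
      (by norm_num : (0:ℝ) < 1/2) (by norm_num : (0:ℝ) < 1/2) (by norm_num)
    have h2 := hm ((1/2 : ℝ) • x0 + (1/2 : ℝ) • a)
    simp only [smul_eq_mul] at h h2
    linarith
  · -- x0 < b < a, write b = t • x0 + (1-t) • a
    set t : ℝ := (a - b) / (a - x0) with ht
    have hax : (0:ℝ) < a - x0 := by linarith
    have ht0 : 0 < t := div_pos (by linarith) hax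
    have ht1 : t < 1 := (div_lt_one hax).2 (by linarith)
    have hcomb : t * x0 + (1 - t) * a = b := by
      field_simp [ht]
      have h' : t * (a - x0) = a - b := by rw [ht]; exact div_mul_cancel₀ _ hax.ne'
      linear_combination -h'
    have h := hF.2 (Set.mem_univ x0) (Set.mem_univ a) (ne_of_lt (by linarith))
      ht0 (by linarith : (0:ℝ) < 1 - t) (by ring)
    simp only [smul_eq_mul, hcomb] at h
    have h3 : F x0 ≤ F a := hm a
    nlinarith

/-- A strictly convex function with global minimum at `x0` is strictly
decreasing to the left of `x0`. -/
lemma aux_strictMono_left (G : ℝ → ℝ) (hG : StrictConvexOn ℝ Set.univ G)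
    (x0 : ℝ) (hm : ∀ x, G x0 ≤ G x) {b a : ℝ} (ha : a ≤ x0) (hba : b < a) :
    G a < G b := by
  have hG' : StrictConvexOn ℝ Set.univ (fun x => G (-x)) := by
    refine ⟨convex_univ, fun x _ y _ hxy p q hp hq hpq => ?_⟩
    have h := hG.2 (Set.mem_univ (-x)) (Set.mem_univ (-y))
      (fun h => hxy (neg_injective h)) hp hq hpq
    simp only [smul_eq_mul, mul_neg, ← neg_add] at h
    simpa [smul_eq_mul, mul_add, neg_add, mul_neg] using h
  have hm' : ∀ x, (fun x => G (-x)) (-x0) ≤ (fun x => G (-x)) x := by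
    intro x; simpa using hm (-x)
  have := aux_strictMono_right (fun x => G (-x)) hG' (-x0) hm'
    (b := -a) (a := -b) (by linarith) (by linarith)
  simpa using this

theorem stmt_1 (F G : ℝ → ℝ) (xF xG : ℝ)
    (hF : StrictConvexOn ℝ Set.univ F) (hG : StrictConvexOn ℝ Set.univ G)
    (hxF : ∀ x, F xF ≤ F x) (hxG : ∀ x, G xG ≤ G x) (hlt : xF < xG)
    (xmin : ℝ → ℝ)
    (hmem : ∀ lam ∈ Set.Icc (0:ℝ) 1, xmin lam ∈ Set.Icc xF xG)
    (hmin : ∀ lam ∈ Set.Icc (0:ℝ) 1,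
      ∀ y, lam * F (xmin lam) + (1 - lam) * G (xmin lam) ≤ lam * F y + (1 - lam) * G y) :
    ∀ lam ∈ Set.Icc (0:ℝ) 1, ∀ lam' ∈ Set.Icc (0:ℝ) 1,
      lam < lam' → xmin lam' ≤ xmin lam := by
  intro lam hlam lam' hlam' hll
  by_contra hcon
  push_neg at hcon
  set b := xmin lam
  set a := xmin lam'
  have hbmem := hmem lam hlam
  have hamem := hmem lam' hlam'
  have h1 := hmin lam hlam a
  have h2 := hmin lam' hlam' b
  have hFba : F b < F a :=
    aux_strictMono_right F hF xF hxF hbmem.1 hcon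
  have hGab : G a < G b :=
    aux_strictMono_left G hG xG hxG hamem.2 hcon
  nlinarith [mul_pos (sub_pos.2 hll) (sub_pos.2 hFba),
    mul_pos (sub_pos.2 hll) (sub_pos.2 hGab)]
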